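/- Let B be a nonnegative irreducible real matrix whose algebra of polynomials ℬ = {p(B) : p ∈ ℂ[t]} is the Bose–Mesner algebra of a commutative D-class association scheme, where D is the diameter of the underlying digraph Γ of B. Then each distance-i matrix A_i of Γ belongs to ℬ; in particular A_D is a polynomial in B. -/

import Mathlib

open Polynomial Matrix



/-- A nonnegative matrix is irreducible iff its underlying digraph is strongly connected. -/
def MatIrreducible {V : Type*} [Fintype V] [DecidableEq V] (B : Matrix V V ℝ) : Prop :=
  ∀ x y : V, ∃ ℓ : ℕ, 0 < ℓ ∧ (B ^ ℓ) x y ≠ 0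

/-- The adjacency matrix of the underlying digraph of a nonnegative matrix `B`:
`(A)_{xy} = 1` iff `(B)_{xy} > 0`. -/
noncomputable def adjOf {V : Type*} [Fintype V] (B : Matrix V V ℝ) : Matrix V V ℝ :=
  Matrix.of fun x y => if 0 < B x y then (1 : ℝ) else 0

/-- Directed distance from `x` to `y` in the underlying digraph of `B`:
the least `ℓ` such that there is a directed walk of length `ℓ` from `x` to `y`. -/
noncomputable def gdist {V : Type*} [Fintype V] [DecidableEq V]
    (B : Matrix V V ℝ) (x y : V) : ℕ :=
  sInf {ℓ : ℕ | ((adjOf B) ^ ℓ) x y ≠ 0}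

/-- `D` is the diameter of the underlying digraph of `B`. -/
def IsDiameter {V : Type*} [Fintype V] [DecidableEq V] (B : Matrix V V ℝ) (D : ℕ) : Prop :=
  (∀ x y : V, gdist B x y ≤ D) ∧ ∃ x y : V, gdist B x y = D

/-- The distance-`i` matrix of the underlying digraph of `B`. -/
noncomputable def distMat {V : Type*} [Fintype V] [DecidableEq V]
    (B : Matrix V V ℝ) (i : ℕ) : Matrix V V ℝ :=
  Matrix.of fun x y => if gdist B x y = i then (1 : ℝ) else 0

/-- The inner product `⟨p,q⟩ = (1/|X|)·trace(p(B)·(conj q(B))ᵀ)` on polynomials. -/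
noncomputable def pInner {V : Type*} [Fintype V] [DecidableEq V]
    (B : Matrix V V ℝ) (p q : Polynomial ℝ) : ℝ :=
  (Matrix.trace (aeval B p * (aeval B q)ᵀ)) / (Fintype.card V : ℝ)

/-- `p` is a family of predistance polynomials for `B`. -/
def IsPredistance {V : Type*} [Fintype V] [DecidableEq V]
    (B : Matrix V V ℝ) (lam : ℝ) (d : ℕ) (p : Fin (d + 1) → Polynomial ℝ) : Prop :=
  (∀ i, (p i).natDegree = (i : ℕ)) ∧
  (∀ i j, i ≠ j → pInner B (p i) (p j) = 0) ∧
  (∀ i, pInner B (p i) (p i) = (p i).eval lam)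

/-- The matrices `Bmat 0, …, Bmat D` are the relation matrices of a commutative
`D`-class association scheme (01-matrices summing to `J`, containing `I`, closed
under transpose, with commuting products lying in their span). -/
def IsAssocScheme {V : Type*} [Fintype V] [DecidableEq V]
    (D : ℕ) (Bmat : Fin (D + 1) → Matrix V V ℂ) : Prop :=
  Bmat 0 = 1 ∧
  (∀ i, Bmat i ≠ 0) ∧
  (∀ i x y, Bmat i x y = 0 ∨ Bmat i x y = 1) ∧
  (∑ i, Bmat i = Matrix.of (fun _ _ => (1 : ℂ))) ∧
  (∀ i, ∃ j, (Bmat i)ᵀ = Bmat j) ∧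
  (∀ i j, Bmat i * Bmat j ∈ Submodule.span ℂ (Set.range Bmat)) ∧
  (∀ i j, Bmat i * Bmat j = Bmat j * Bmat i)


section myaux
variable {V : Type*} [Fintype V] [DecidableEq V]

variable {V : Type*} [Fintype V] [DecidableEq V]

lemma myPowNonneg (A : Matrix V V ℝ) (hA : ∀ x y, 0 ≤ A x y) (ℓ : ℕ) :
    ∀ x y, 0 ≤ (A ^ ℓ) x y := by
  induction ℓ with
  | zero =>
    intro x y
    by_cases h : x = y <;> simp [pow_zero, Matrix.one_apply, h]
  | succ n ih =>
    intro x y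
    rw [pow_succ, Matrix.mul_apply]
    exact Finset.sum_nonneg fun z _ => mul_nonneg (ih x z) (hA z y)

lemma myPowSupp (A C : Matrix V V ℝ) (hA : ∀ x y, 0 ≤ A x y) (hC : ∀ x y, 0 ≤ C x y)
    (h : ∀ x y, (A x y = 0 ↔ C x y = 0)) (ℓ : ℕ) :
    ∀ x y, ((A ^ ℓ) x y = 0 ↔ (C ^ ℓ) x y = 0) := by
  induction ℓ with
  | zero => intro x y; simp
  | succ n ih =>
    intro x y
    rw [pow_succ, pow_succ, Matrix.mul_apply, Matrix.mul_apply,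
      Finset.sum_eq_zero_iff_of_nonneg
        (fun z _ => mul_nonneg (myPowNonneg A hA n x z) (hA z y)),
      Finset.sum_eq_zero_iff_of_nonneg
        (fun z _ => mul_nonneg (myPowNonneg C hC n x z) (hC z y))]
    constructor <;> intro H z hz
    · rcases mul_eq_zero.mp (H z hz) with h1 | h2
      · exact mul_eq_zero.mpr (Or.inl ((ih x z).mp h1))
      · exact mul_eq_zero.mpr (Or.inr ((h z y).mp h2))
    · rcases mul_eq_zero.mp (H z hz) with h1 | h2
      · exact mul_eq_zero.mpr (Or.inl ((ih x z).mpr h1))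
      · exact mul_eq_zero.mpr (Or.inr ((h z y).mpr h2))

lemma myMapPow (B : Matrix V V ℝ) (ℓ : ℕ) :
    (B.map Complex.ofReal) ^ ℓ = (B ^ ℓ).map Complex.ofReal := by
  induction ℓ with
  | zero => simp [Matrix.map_one Complex.ofReal Complex.ofReal_zero Complex.ofReal_one]
  | succ n ih =>
    rw [pow_succ, pow_succ, ih]
    ext x y
    simp [Matrix.mul_apply, Matrix.map_apply]

end myaux

theorem stmt18 {V : Type*} [Fintype V] [DecidableEq V] [Nonempty V]
    (B : Matrix V V ℝ) (hnn : ∀ x y, 0 ≤ B x y) (hirr : MatIrreducible B)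
    (D : ℕ) (hD : IsDiameter B D)
    -- `ℬ = {p(B) : p ∈ ℂ[t]}` is the Bose--Mesner algebra of a commutative
    -- `D`-class association scheme:
    (hBM : ∃ Bmat : Fin (D + 1) → Matrix V V ℂ, IsAssocScheme D Bmat ∧
      (↑(Submodule.span ℂ (Set.range Bmat)) : Set (Matrix V V ℂ)) =
        {M | ∃ p : Polynomial ℂ, aeval (B.map Complex.ofReal) p = M}) :
    ∀ i : Fin (D + 1), ∃ p : Polynomial ℂ,
      aeval (B.map Complex.ofReal) p = (distMat B (i : ℕ)).map Complex.ofReal := by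
  intro i
  obtain ⟨Bmat, ⟨h0, hne, h01, hsum, htr, hprod, hcomm⟩, hspan⟩ := hBM
  -- each position lies in exactly one class
  have hclass : ∀ x y : V, ∃! j : Fin (D + 1), Bmat j x y = 1 := by
    intro x y
    have hs : ∑ j, Bmat j x y = 1 := by
      have := congrFun (congrFun hsum x) y
      simpa [Matrix.sum_apply] using this
    set s : Finset (Fin (D + 1)) := Finset.univ.filter (fun j => Bmat j x y = 1) with hsdef
    have hcard : (s.card : ℂ) = 1 := by
      rw [← hs]
      rw [← Finset.sum_filter_add_sum_filter_not Finset.univ (fun j => Bmat j x y = 1)]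
      have h1 : ∑ j ∈ s, Bmat j x y = (s.card : ℂ) := by
        rw [Finset.sum_congr rfl (fun j hj => (Finset.mem_filter.mp hj).2)]
        simp [hsdef]
      have h2 : ∑ j ∈ Finset.univ.filter (fun j => ¬ Bmat j x y = 1), Bmat j x y = 0 := by
        apply Finset.sum_eq_zero
        intro j hj
        rcases h01 j x y with h | h
        · exact h
        · exact absurd h (Finset.mem_filter.mp hj).2
      rw [h1, h2, add_zero]
    have hcard1 : s.card = 1 := by exact_mod_cast hcard
    obtain ⟨j0, hj0⟩ := Finset.card_eq_one.mp hcard1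
    refine ⟨j0, ?_, ?_⟩
    · have : j0 ∈ s := hj0 ▸ Finset.mem_singleton_self j0
      exact (Finset.mem_filter.mp this).2
    · intro j hj
      have : j ∈ s := Finset.mem_filter.mpr ⟨Finset.mem_univ _, hj⟩
      rw [hj0] at this
      exact Finset.mem_singleton.mp this
  -- gdist in terms of powers of B itself
  have hg : ∀ x y : V, gdist B x y = sInf {ℓ : ℕ | (B ^ ℓ) x y ≠ 0} := by
    intro x y
    unfold gdist
    congr 1
    ext ℓ
    simp only [Set.mem_setOf_eq, not_iff_not]
    have hadjnn : ∀ x y, 0 ≤ adjOf B x y := by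
      intro x y
      unfold adjOf
      by_cases h : 0 < B x y <;> simp [h]
    have hsupp : ∀ x y, (adjOf B x y = 0 ↔ B x y = 0) := by
      intro x y
      unfold adjOf
      by_cases h : 0 < B x y
      · simp [h, ne_of_gt h]
      · simp [h, le_antisymm (not_lt.mp h) (hnn x y)]
    exact myPowSupp (adjOf B) B hadjnn hnn hsupp ℓ x y
  -- powers of B are constant on classes
  have hconst : ∀ (j : Fin (D + 1)) (x y x' y' : V), Bmat j x y = 1 → Bmat j x' y' = 1 →
      ∀ ℓ : ℕ, (B ^ ℓ) x y = (B ^ ℓ) x' y' := by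
    intro j x y x' y' hxy hxy' ℓ
    have hmem : (B.map Complex.ofReal) ^ ℓ ∈ Submodule.span ℂ (Set.range Bmat) := by
      have hm : (B.map Complex.ofReal) ^ ℓ ∈
          {M : Matrix V V ℂ | ∃ p : Polynomial ℂ, aeval (B.map Complex.ofReal) p = M} :=
        ⟨X ^ ℓ, by simp⟩
      rw [← hspan] at hm
      exact hm
    obtain ⟨c, hc⟩ := (Submodule.mem_span_range_iff_exists_fun ℂ).mp hmem
    have key : ∀ u v : V, Bmat j u v = 1 → ((B.map Complex.ofReal) ^ ℓ) u v = c j := by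
      intro u v huv
      rw [← hc]
      rw [Matrix.sum_apply]
      rw [Finset.sum_eq_single j]
      · rw [Matrix.smul_apply, huv, smul_eq_mul, mul_one]
      · intro k _ hk
        rcases h01 k u v with h | h
        · rw [Matrix.smul_apply, h, smul_eq_mul, mul_zero]
        · exact absurd ((hclass u v).unique h huv) hk
      · intro h; exact absurd (Finset.mem_univ j) h
    have e1 := key x y hxy
    have e2 := key x' y' hxy'
    rw [myMapPow] at e1 e2
    have h3 : ((B ^ ℓ) x y : ℂ) = ((B ^ ℓ) x' y' : ℂ) := by
      simpa [Matrix.map_apply] using e1.trans e2.symm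
    exact_mod_cast h3
  -- gdist is constant on classes
  have hgconst : ∀ (j : Fin (D + 1)) (x y x' y' : V), Bmat j x y = 1 → Bmat j x' y' = 1 →
      gdist B x y = gdist B x' y' := by
    intro j x y x' y' hxy hxy'
    rw [hg, hg]
    congr 1
    ext ℓ
    simp only [Set.mem_setOf_eq]
    rw [hconst j x y x' y' hxy hxy' ℓ]
  -- a representative pair for each class
  have hrep : ∀ j : Fin (D + 1), ∃ xy : V × V, Bmat j xy.1 xy.2 = 1 := by
    intro j
    by_contra hcon
    push_neg at hcon
    apply hne j
    ext x y
    rcases h01 j x y with h | h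
    · simpa using h
    · exact absurd h (hcon (x, y))
  choose rep hrepc using hrep
  -- the distance matrix lies in the span
  have hmemT : (distMat B (i : ℕ)).map Complex.ofReal ∈ Submodule.span ℂ (Set.range Bmat) := by
    have hEq : ∑ j, (if gdist B (rep j).1 (rep j).2 = (i : ℕ) then (1 : ℂ) else 0) • Bmat j =
        (distMat B (i : ℕ)).map Complex.ofReal := by
      ext x y
      obtain ⟨j0, hj0, huniq⟩ := hclass x y
      rw [Matrix.sum_apply]
      rw [Finset.sum_eq_single j0]
      · have hgd : gdist B (rep j0).1 (rep j0).2 = gdist B x y :=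
          hgconst j0 _ _ _ _ (hrepc j0) hj0
        rw [Matrix.smul_apply, hj0, smul_eq_mul, mul_one, hgd]
        simp only [Matrix.map_apply, distMat, Matrix.of_apply]
        by_cases h : gdist B x y = (i : ℕ) <;> simp [h]
      · intro k _ hk
        rcases h01 k x y with h | h
        · rw [Matrix.smul_apply, h, smul_eq_mul, mul_zero]
        · exact absurd (huniq k h) hk
      · intro h; exact absurd (Finset.mem_univ j0) h
    rw [← hEq]
    exact Submodule.sum_mem _ fun j _ =>
      Submodule.smul_mem _ _ (Submodule.subset_span ⟨j, rfl⟩)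
  have hm : (distMat B (i : ℕ)).map Complex.ofReal ∈
      (↑(Submodule.span ℂ (Set.range Bmat)) : Set (Matrix V V ℂ)) := hmemT
  rw [hspan] at hm
  exact hm
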